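/- arXiv:1009.1886 — 5 statements merged into one kernel-verified Lean document; each statement's English description precedes it below -/
import Mathlib

section
/- If p_i < p_j < p_k, then x_{ij}(y) < x_{ik}(y) < x_{jk}(y) for all y < y_{ijk}, and x_{ij}(y) > x_{ik}(y) > x_{jk}(y) for all y > y_{ijk}. -/
noncomputable def xline (pa pb ca cb y : ℝ) : ℝ := -(pa + pb) * y - (ca - cb) / (pa - pb)

noncomputable def ycrit (pi pj pk ci cj ck : ℝ) : ℝ :=
  -(((ci - cj) / (pi - pj) - (ci - ck) / (pi - pk)) / (pj - pk))

/-- Ordering of the boundary lines below and above the critical value y_{ijk}. -/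
theorem xline_order (pi pj pk ci cj ck : ℝ) (hij : pi < pj) (hjk : pj < pk) :
    (∀ y, y < ycrit pi pj pk ci cj ck →
      xline pi pj ci cj y < xline pi pk ci ck y ∧
      xline pi pk ci ck y < xline pj pk cj ck y) ∧
    (∀ y, y > ycrit pi pj pk ci cj ck →
      xline pi pj ci cj y > xline pi pk ci ck y ∧
      xline pi pk ci ck y > xline pj pk cj ck y) := by
  have hik : pi < pk := hij.trans hjk
  have h1 : pi - pj ≠ 0 := sub_ne_zero.mpr hij.ne
  have h2 : pi - pk ≠ 0 := sub_ne_zero.mpr hik.ne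
  have h3 : pj - pk ≠ 0 := sub_ne_zero.mpr hjk.ne
  have key1 : ∀ y, xline pi pk ci ck y - xline pi pj ci cj y
      = (pk - pj) * (ycrit pi pj pk ci cj ck - y) := by
    intro y; unfold xline ycrit; field_simp; ring
  have key2 : ∀ y, xline pj pk cj ck y - xline pi pk ci ck y
      = (pj - pi) * (ycrit pi pj pk ci cj ck - y) := by
    intro y; unfold xline ycrit; field_simp; ring
  constructor
  · intro y hy
    constructor
    · have := key1 y
      nlinarith [sub_pos.mpr hy, sub_pos.mpr hjk]
    · have := key2 y
      nlinarith [sub_pos.mpr hy, sub_pos.mpr hij]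
  · intro y hy
    constructor
    · have := key1 y
      nlinarith [sub_pos.mpr hy, sub_pos.mpr hjk]
    · have := key2 y
      nlinarith [sub_pos.mpr hy, sub_pos.mpr hij]
end

section
/- If p_i < p_j < p_k < p_l, then y_{ijk}(t) < y_{ijl}(t) < y_{ikl}(t) < y_{jkl}(t) for all t < t_{ijkl}, and the reversed strict inequalities hold for all t > t_{ijkl}. -/
noncomputable def c3s (pi pj pk ci cj ck : ℝ) : ℝ :=
  ci / ((pi - pj) * (pi - pk)) + cj / ((pj - pi) * (pj - pk)) + ck / ((pk - pi) * (pk - pj))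

noncomputable def yfun (pi pj pk ci cj ck t : ℝ) : ℝ :=
  -(pi + pj + pk) * t - c3s pi pj pk ci cj ck

noncomputable def c4s (pi pj pk pl ci cj ck cl : ℝ) : ℝ :=
  ci / ((pi - pj) * (pi - pk) * (pi - pl)) + cj / ((pj - pi) * (pj - pk) * (pj - pl)) +
    ck / ((pk - pi) * (pk - pj) * (pk - pl)) + cl / ((pl - pi) * (pl - pj) * (pl - pk))

noncomputable def tcrit4 (pi pj pk pl ci cj ck cl : ℝ) : ℝ :=
  -c4s pi pj pk pl ci cj ck cl

lemma c3s_eq (pi pj pk ci cj ck : ℝ) (h1 : pi - pj ≠ 0) (h2 : pi - pk ≠ 0) (h3 : pj - pk ≠ 0) :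
    c3s pi pj pk ci cj ck
      = (ci * (pj - pk) - cj * (pi - pk) + ck * (pi - pj)) / ((pi - pj) * (pi - pk) * (pj - pk)) := by
  unfold c3s
  have h1' : pj - pi ≠ 0 := fun h => h1 (by linarith [sub_eq_zero.1 h])
  have h2' : pk - pi ≠ 0 := fun h => h2 (by linarith [sub_eq_zero.1 h])
  have h3' : pk - pj ≠ 0 := fun h => h3 (by linarith [sub_eq_zero.1 h])
  field_simp
  ring

lemma c4s_eq (pi pj pk pl ci cj ck cl : ℝ) (h1 : pi - pj ≠ 0) (h2 : pi - pk ≠ 0)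
    (h3 : pi - pl ≠ 0) (h4 : pj - pk ≠ 0) (h5 : pj - pl ≠ 0) (h6 : pk - pl ≠ 0) :
    c4s pi pj pk pl ci cj ck cl
      = (ci * ((pj - pk) * (pj - pl) * (pk - pl)) - cj * ((pi - pk) * (pi - pl) * (pk - pl))
          + ck * ((pi - pj) * (pi - pl) * (pj - pl)) - cl * ((pi - pj) * (pi - pk) * (pj - pk)))
        / ((pi - pj) * (pi - pk) * (pi - pl) * (pj - pk) * (pj - pl) * (pk - pl)) := by
  unfold c4s
  have h1' : pj - pi ≠ 0 := fun h => h1 (by linarith [sub_eq_zero.1 h])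
  have h2' : pk - pi ≠ 0 := fun h => h2 (by linarith [sub_eq_zero.1 h])
  have h3' : pl - pi ≠ 0 := fun h => h3 (by linarith [sub_eq_zero.1 h])
  have h4' : pk - pj ≠ 0 := fun h => h4 (by linarith [sub_eq_zero.1 h])
  have h5' : pl - pj ≠ 0 := fun h => h5 (by linarith [sub_eq_zero.1 h])
  have h6' : pl - pk ≠ 0 := fun h => h6 (by linarith [sub_eq_zero.1 h])
  field_simp
  ring

section diffs
variable (pi pj pk pl ci cj ck cl : ℝ)
variable (h1 : pi - pj ≠ 0) (h2 : pi - pk ≠ 0) (h3 : pi - pl ≠ 0)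
  (h4 : pj - pk ≠ 0) (h5 : pj - pl ≠ 0) (h6 : pk - pl ≠ 0)

include h1 h2 h3 h4 h5 h6 in
lemma diff1 :
    c3s pi pj pl ci cj cl - c3s pi pj pk ci cj ck
      = (pl - pk) * c4s pi pj pk pl ci cj ck cl := by
  rw [c3s_eq pi pj pl ci cj cl h1 h3 h5, c3s_eq pi pj pk ci cj ck h1 h2 h4,
    c4s_eq pi pj pk pl ci cj ck cl h1 h2 h3 h4 h5 h6]
  field_simp
  ring

include h1 h2 h3 h4 h5 h6 in
lemma diff2 :
    c3s pi pk pl ci ck cl - c3s pi pj pl ci cj cl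
      = (pk - pj) * c4s pi pj pk pl ci cj ck cl := by
  rw [c3s_eq pi pk pl ci ck cl h2 h3 h6, c3s_eq pi pj pl ci cj cl h1 h3 h5,
    c4s_eq pi pj pk pl ci cj ck cl h1 h2 h3 h4 h5 h6]
  field_simp
  ring

include h1 h2 h3 h4 h5 h6 in
lemma diff3 :
    c3s pj pk pl cj ck cl - c3s pi pk pl ci ck cl
      = (pj - pi) * c4s pi pj pk pl ci cj ck cl := by
  rw [c3s_eq pj pk pl cj ck cl h4 h5 h6, c3s_eq pi pk pl ci ck cl h2 h3 h6,
    c4s_eq pi pj pk pl ci cj ck cl h1 h2 h3 h4 h5 h6]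
  field_simp
  ring

end diffs

/-- Ordering of the critical y-values before and after the critical time t_{ijkl}. -/
theorem ycrit_order (pi pj pk pl ci cj ck cl : ℝ)
    (hij : pi < pj) (hjk : pj < pk) (hkl : pk < pl) :
    (∀ t, t < tcrit4 pi pj pk pl ci cj ck cl →
      yfun pi pj pk ci cj ck t < yfun pi pj pl ci cj cl t ∧
      yfun pi pj pl ci cj cl t < yfun pi pk pl ci ck cl t ∧
      yfun pi pk pl ci ck cl t < yfun pj pk pl cj ck cl t) ∧
    (∀ t, t > tcrit4 pi pj pk pl ci cj ck cl →
      yfun pi pj pk ci cj ck t > yfun pi pj pl ci cj cl t ∧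
      yfun pi pj pl ci cj cl t > yfun pi pk pl ci ck cl t ∧
      yfun pi pk pl ci ck cl t > yfun pj pk pl cj ck cl t) := by
  have h1 : pi - pj ≠ 0 := sub_ne_zero.2 hij.ne
  have h2 : pi - pk ≠ 0 := sub_ne_zero.2 (hij.trans hjk).ne
  have h3 : pi - pl ≠ 0 := sub_ne_zero.2 ((hij.trans hjk).trans hkl).ne
  have h4 : pj - pk ≠ 0 := sub_ne_zero.2 hjk.ne
  have h5 : pj - pl ≠ 0 := sub_ne_zero.2 (hjk.trans hkl).ne
  have h6 : pk - pl ≠ 0 := sub_ne_zero.2 hkl.ne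
  have d1 := diff1 pi pj pk pl ci cj ck cl h1 h2 h3 h4 h5 h6
  have d2 := diff2 pi pj pk pl ci cj ck cl h1 h2 h3 h4 h5 h6
  have d3 := diff3 pi pj pk pl ci cj ck cl h1 h2 h3 h4 h5 h6
  have e1 : ∀ t : ℝ, yfun pi pj pl ci cj cl t - yfun pi pj pk ci cj ck t
      = (pl - pk) * (tcrit4 pi pj pk pl ci cj ck cl - t) := by
    intro t
    simp only [yfun, tcrit4]
    linear_combination -d1
  have e2 : ∀ t : ℝ, yfun pi pk pl ci ck cl t - yfun pi pj pl ci cj cl t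
      = (pk - pj) * (tcrit4 pi pj pk pl ci cj ck cl - t) := by
    intro t
    simp only [yfun, tcrit4]
    linear_combination -d2
  have e3 : ∀ t : ℝ, yfun pj pk pl cj ck cl t - yfun pi pk pl ci ck cl t
      = (pj - pi) * (tcrit4 pi pj pk pl ci cj ck cl - t) := by
    intro t
    simp only [yfun, tcrit4]
    linear_combination -d3
  constructor
  · intro t ht
    have hpos : (0:ℝ) < tcrit4 pi pj pk pl ci cj ck cl - t := by linarith
    refine ⟨?_, ?_, ?_⟩
    · nlinarith [e1 t, mul_pos (sub_pos.2 hkl) hpos]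
    · nlinarith [e2 t, mul_pos (sub_pos.2 hjk) hpos]
    · nlinarith [e3 t, mul_pos (sub_pos.2 hij) hpos]
  · intro t ht
    have hneg : tcrit4 pi pj pk pl ci cj ck cl - t < 0 := by linarith
    refine ⟨?_, ?_, ?_⟩
    · nlinarith [e1 t, mul_neg_of_pos_of_neg (sub_pos.2 hkl) hneg]
    · nlinarith [e2 t, mul_neg_of_pos_of_neg (sub_pos.2 hjk) hneg]
    · nlinarith [e3 t, mul_neg_of_pos_of_neg (sub_pos.2 hij) hneg]
end

section
/- Under the substitution c_k ↦ c_k + p_k^r t for a fixed real t and natural number r, the divided difference c_{k_1…k_n} transforms to c_{k_1…k_n} + h_{r-n+1}(p_{k_1},…,p_{k_n}) t, where h_m is the complete homogeneous symmetric polynomial of degree m (with h_0 = 1 and h_m = 0 for m < 0). -/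
/-- Divided difference of c with respect to the nodes p. -/
noncomputable def divDiffFin (n : ℕ) (p c : Fin n → ℝ) : ℝ :=
  ∑ i, c i / ∏ j ∈ Finset.univ.erase i, (p i - p j)

/-- Complete homogeneous symmetric polynomial of degree m in n variables. -/
noncomputable def hsym (n m : ℕ) (p : Fin n → ℝ) : ℝ :=
  ∑ a ∈ Finset.Nat.antidiagonalTuple n m, ∏ i, p i ^ a i

/-- Complete homogeneous symmetric polynomial with h_m = 0 for m < 0. -/
noncomputable def hsymZ (n : ℕ) (m : ℤ) (p : Fin n → ℝ) : ℝ :=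
  if m < 0 then 0 else hsym n m.toNat p

lemma hsym_zero (n : ℕ) (p : Fin n → ℝ) : hsym n 0 p = 1 := by
  simp [hsym, Finset.Nat.antidiagonalTuple_zero_right]

lemma hsym_zero_vars (m : ℕ) (p : Fin 0 → ℝ) : hsym 0 (m+1) p = 0 := by
  simp [hsym, Finset.Nat.antidiagonalTuple_zero_succ]

theorem hsym_rec (n m : ℕ) (p : Fin (n+1) → ℝ) :
    hsym (n+1) (m+1) p = hsym n (m+1) (p ∘ Fin.succ) + p 0 * hsym (n+1) m p := by
  classical
  unfold hsym
  rw [← Finset.sum_filter_add_sum_filter_not (Finset.Nat.antidiagonalTuple (n+1) (m+1))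
    (fun a => a 0 = 0)]
  congr 1
  · refine Finset.sum_nbij' (i := fun a => Fin.tail a) (j := fun b => Fin.cons 0 b) ?_ ?_ ?_ ?_ ?_
    · intro a ha
      simp only [Finset.mem_filter, Finset.Nat.mem_antidiagonalTuple,
        Fin.sum_univ_succ (f := a), Fin.tail] at ha ⊢
      omega
    · intro b hb
      simp only [Finset.mem_filter, Finset.Nat.mem_antidiagonalTuple,
        Fin.sum_univ_succ (f := Fin.cons 0 b), Fin.cons_zero, Fin.cons_succ] at hb ⊢
      exact ⟨by omega, trivial⟩
    · intro a ha
      simp only [Finset.mem_filter] at ha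
      rw [← ha.2]
      exact Fin.cons_self_tail a
    · intro b _; exact Fin.tail_cons _ _
    · intro a ha
      simp only [Finset.mem_filter] at ha
      rw [Fin.prod_univ_succ (f := fun i => p i ^ a i), ha.2, pow_zero, one_mul]
      rfl
  · rw [Finset.mul_sum]
    refine Finset.sum_nbij' (i := fun a => Fin.cons (a 0 - 1) (Fin.tail a))
      (j := fun b => Fin.cons (b 0 + 1) (Fin.tail b)) ?_ ?_ ?_ ?_ ?_
    · intro a ha
      simp only [Finset.mem_filter, Finset.Nat.mem_antidiagonalTuple,
        Fin.sum_univ_succ (f := a),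
        Fin.sum_univ_succ (f := Fin.cons (a 0 - 1) (Fin.tail a)),
        Fin.cons_zero, Fin.cons_succ, Fin.tail] at ha ⊢
      omega
    · intro b hb
      simp only [Finset.mem_filter, Finset.Nat.mem_antidiagonalTuple,
        Fin.sum_univ_succ (f := b),
        Fin.sum_univ_succ (f := Fin.cons (b 0 + 1) (Fin.tail b)),
        Fin.cons_zero, Fin.cons_succ, Fin.tail] at hb ⊢
      omega
    · intro a ha
      simp only [Finset.mem_filter] at ha
      have h0 : 1 ≤ a 0 := Nat.one_le_iff_ne_zero.2 ha.2
      funext i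
      refine Fin.cases ?_ (fun i => ?_) i
      · simp only [Fin.cons_zero, Fin.tail_cons]
        omega
      · simp [Fin.tail_cons, Fin.cons_succ, Fin.tail]
    · intro b _
      funext i
      refine Fin.cases ?_ (fun i => ?_) i
      · simp [Fin.tail_cons]
      · simp [Fin.tail_cons, Fin.cons_succ, Fin.tail]
    · intro a ha
      simp only [Finset.mem_filter] at ha
      have h0 : 1 ≤ a 0 := Nat.one_le_iff_ne_zero.2 ha.2
      rw [Fin.prod_univ_succ (f := fun i => p i ^ a i),
        Fin.prod_univ_succ (f := fun i => p i ^ (Fin.cons (a 0 - 1) (Fin.tail a) : Fin (n+1) → ℕ) i)]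
      simp only [Fin.cons_zero, Fin.cons_succ, Fin.tail]
      rw [← mul_assoc, ← pow_succ']
      congr 2
      omega

theorem hsymZ_rec (n : ℕ) (m : ℤ) (p : Fin (n+1) → ℝ) :
    hsymZ (n+1) m p = hsymZ n m (p ∘ Fin.succ) + p 0 * hsymZ (n+1) (m-1) p := by
  rcases lt_trichotomy m 0 with h | h | h
  · have h' : m - 1 < 0 := by omega
    simp [hsymZ, h, h']
  · subst h
    simp [hsymZ, hsym_zero]
  · obtain ⟨k, rfl⟩ : ∃ k : ℕ, m = (k : ℤ) + 1 := ⟨(m - 1).toNat, by omega⟩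
    have h1 : ¬ ((k : ℤ) + 1 < 0) := by omega
    have h2 : ¬ ((k : ℤ) + 1 - 1 < 0) := by omega
    have h3 : ((k : ℤ) + 1).toNat = k + 1 := by omega
    have h4 : ((k : ℤ) + 1 - 1).toNat = k := by omega
    simp only [hsymZ, h1, h2, h3, h4, if_false]
    exact hsym_rec n k p

open Polynomial in
lemma coeff_basis_univ (n : ℕ) (p : Fin n → ℝ) (hp : Function.Injective p) (i : Fin n) :
    (Lagrange.basis Finset.univ p i).coeff (n - 1)
      = ∏ j ∈ Finset.univ.erase i, (p i - p j)⁻¹ := by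
  classical
  have hvs : Set.InjOn p ↑(Finset.univ : Finset (Fin n)) := hp.injOn
  have hdeg := Lagrange.natDegree_basis hvs (Finset.mem_univ i)
  rw [Finset.card_univ, Fintype.card_fin] at hdeg
  rw [← hdeg, Polynomial.coeff_natDegree]
  unfold Lagrange.basis
  rw [Polynomial.leadingCoeff_prod]
  refine Finset.prod_congr rfl fun j hj => ?_
  unfold Lagrange.basisDivisor
  rw [Polynomial.leadingCoeff_mul, Polynomial.leadingCoeff_C,
    (Polynomial.monic_X_sub_C (p j)).leadingCoeff, mul_one]

lemma sum_inv_prod (n : ℕ) (hn : 0 < n) (p : Fin n → ℝ) (hp : Function.Injective p) :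
    ∑ i, (∏ j ∈ Finset.univ.erase i, (p i - p j))⁻¹ = if n = 1 then 1 else 0 := by
  classical
  have hvs : Set.InjOn p ↑(Finset.univ : Finset (Fin n)) := hp.injOn
  have hsb := Lagrange.sum_basis hvs (Finset.univ_nonempty_iff.2 ⟨⟨0, hn⟩⟩)
  have key := congrArg (fun q => Polynomial.coeff q (n - 1)) hsb
  simp only [Polynomial.finset_sum_coeff] at key
  rw [Finset.sum_congr rfl (fun i _ => coeff_basis_univ n p hp i)] at key
  simp only [Finset.prod_inv_distrib] at key
  rw [key, Polynomial.coeff_one]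
  by_cases h1 : n = 1
  · simp [h1]
  · have : ¬ (n - 1 = 0) := by omega
    simp [h1, this]

lemma erase_erase_eq_image (k : ℕ) (i : Fin k) :
    ((Finset.univ.erase (Fin.succ i)).erase 0 : Finset (Fin (k+1)))
      = Finset.image Fin.succ (Finset.univ.erase i) := by
  ext j
  simp only [Finset.mem_erase, Finset.mem_univ, and_true, Finset.mem_image]
  constructor
  · rintro ⟨h0, hsi⟩
    obtain ⟨j', rfl⟩ := Fin.exists_succ_eq.2 h0
    exact ⟨j', fun h => hsi (by rw [h]), rfl⟩
  · rintro ⟨j', hj', rfl⟩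
    exact ⟨Fin.succ_ne_zero j', fun h => hj' (Fin.succ_injective _ h)⟩

lemma prod_erase_succ (k : ℕ) (i : Fin k) (f : Fin (k+1) → ℝ) :
    ∏ j ∈ Finset.univ.erase (Fin.succ i), f j
      = f 0 * ∏ j ∈ Finset.univ.erase i, f (Fin.succ j) := by
  rw [← Finset.mul_prod_erase _ f
    (show (0 : Fin (k+1)) ∈ Finset.univ.erase (Fin.succ i) by
      simp [Finset.mem_erase, (Fin.succ_ne_zero i).symm]),
    erase_erase_eq_image, Finset.prod_image (fun a _ b _ h => Fin.succ_injective _ h)]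

lemma divDiff_rec (k r : ℕ) (p : Fin (k+1) → ℝ) (hp : Function.Injective p) :
    divDiffFin (k+1) p (fun i => p i ^ (r+1))
      = divDiffFin k (p ∘ Fin.succ) (fun i => (p ∘ Fin.succ) i ^ r)
        + p 0 * divDiffFin (k+1) p (fun i => p i ^ r) := by
  have key : divDiffFin (k+1) p (fun i => p i ^ (r+1))
      - p 0 * divDiffFin (k+1) p (fun i => p i ^ r)
      = ∑ i, (p i ^ r * (p i - p 0)) / ∏ j ∈ Finset.univ.erase i, (p i - p j) := by
    unfold divDiffFin
    rw [Finset.mul_sum, ← Finset.sum_sub_distrib]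
    refine Finset.sum_congr rfl fun i _ => ?_
    ring
  have h2 : divDiffFin k (p ∘ Fin.succ) (fun i => (p ∘ Fin.succ) i ^ r)
      = ∑ i, (p i ^ r * (p i - p 0)) / ∏ j ∈ Finset.univ.erase i, (p i - p j) := by
    rw [Fin.sum_univ_succ]
    rw [sub_self, mul_zero, zero_div, zero_add]
    unfold divDiffFin
    refine Finset.sum_congr rfl fun i _ => ?_
    rw [prod_erase_succ]
    have hne : p (Fin.succ i) - p 0 ≠ 0 :=
      sub_ne_zero.2 (fun h => Fin.succ_ne_zero i (hp h))
    rw [mul_comm (p (Fin.succ i) ^ r), mul_div_mul_left _ _ hne]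
    rfl
  linarith [key, h2]

lemma divDiff_pow (r : ℕ) : ∀ n : ℕ, 0 < n → ∀ p : Fin n → ℝ, Function.Injective p →
    divDiffFin n p (fun k => p k ^ r) = hsymZ n ((r : ℤ) - n + 1) p := by
  induction r with
  | zero =>
    intro n hn p hp
    have : divDiffFin n p (fun k => p k ^ 0)
        = ∑ i, (∏ j ∈ Finset.univ.erase i, (p i - p j))⁻¹ := by
      unfold divDiffFin
      refine Finset.sum_congr rfl fun i _ => ?_
      simp
    rw [this, sum_inv_prod n hn p hp]
    rcases eq_or_lt_of_le (Nat.succ_le_of_lt hn) with h | h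
    · have h1 : n = 1 := h.symm
      subst h1
      norm_num [hsymZ, hsym_zero]
    · have h1 : n ≠ 1 := by omega
      have h2 : ((0:ℕ) : ℤ) - n + 1 < 0 := by
        have : (2 : ℤ) ≤ n := by exact_mod_cast h
        push_cast
        omega
      rw [if_neg h1, hsymZ, if_pos h2]
  | succ r ih =>
    intro n hn p hp
    obtain ⟨k, rfl⟩ : ∃ k, n = k + 1 := ⟨n - 1, by omega⟩
    rw [show ((r+1 : ℕ) : ℤ) - ((k+1 : ℕ) : ℤ) + 1 = ((r : ℤ) - k + 1) by push_cast; ring,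
      hsymZ_rec k ((r : ℤ) - k + 1) p, divDiff_rec k r p hp]
    have hps : Function.Injective (p ∘ Fin.succ) :=
      hp.comp (Fin.succ_injective k)
    congr 1
    · rcases Nat.eq_zero_or_pos k with hk | hk
      · subst hk
        have hd : divDiffFin 0 (p ∘ Fin.succ) (fun i => (p ∘ Fin.succ) i ^ r) = 0 := by
          simp [divDiffFin]
        have hz : hsymZ 0 ((r : ℤ) - ((0:ℕ) : ℤ) + 1) (p ∘ Fin.succ) = 0 := by
          have h1 : ¬ ((r : ℤ) - ((0:ℕ) : ℤ) + 1 < 0) := by push_cast; omega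
          have h2 : ((r : ℤ) - ((0:ℕ) : ℤ) + 1).toNat = r + 1 := by push_cast; omega
          rw [hsymZ, if_neg h1, h2]
          exact hsym_zero_vars r _
        rw [hd]
        exact hz.symm
      · exact ih k hk (p ∘ Fin.succ) hps
    · congr 1
      rw [ih (k+1) (Nat.succ_pos k) p hp]
      congr 1
      push_cast
      ring

/-- Under c_k ↦ c_k + p_k^r t, the divided difference changes by
h_{r-n+1}(p_{k_1},…,p_{k_n}) t. -/
theorem divDiff_shift (n : ℕ) (hn : 0 < n) (p c : Fin n → ℝ)
    (hp : Function.Injective p) (r : ℕ) (t : ℝ) :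
    divDiffFin n p (fun k => c k + p k ^ r * t)
      = divDiffFin n p c + hsymZ n ((r : ℤ) - n + 1) p * t := by
  have hlin : divDiffFin n p (fun k => c k + p k ^ r * t)
      = divDiffFin n p c + divDiffFin n p (fun k => p k ^ r) * t := by
    unfold divDiffFin
    rw [Finset.sum_mul, ← Finset.sum_add_distrib]
    refine Finset.sum_congr rfl fun i _ => ?_
    ring
  rw [hlin, divDiff_pow r n hn p hp]
end

section
/- With phases θ_k = Σ_{r=1}^N p_k^r t^{(r)} + c_k and critical values t^{(n-1)}_{k_1…k_n} = -Σ_{r=1}^{N+1-n} h_r(p_{k_1},…,p_{k_n}) t^{(n+r-1)} - c_{k_1…k_n}, the identity t^{(n-1)}_{k_1…\hat{k_i}…k_{n+1}} - t^{(n-1)}_{k_1…\hat{k_j}…k_{n+1}} = (p_{k_i} - p_{k_j})(t^{(n)} - t^{(n)}_{k_1…k_{n+1}}) holds for all i, j ∈ {1,…,n+1} and all values of the variables t^{(n)},…,t^{(N)}. -/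
/-- Divided difference over a finite index set. -/
noncomputable def divDiff {ι : Type*} [DecidableEq ι] (p c : ι → ℝ) (s : Finset ι) : ℝ :=
  ∑ a ∈ s, c a / ∏ b ∈ s.erase a, (p a - p b)

/-- Complete homogeneous symmetric polynomial of degree m over a finite set. -/
noncomputable def hS {ι : Type*} [DecidableEq ι] (p : ι → ℝ) (s : Finset ι) (m : ℕ) : ℝ :=
  ∑ d ∈ s.sym m, ((d : Multiset ι).map p).prod

/-- The critical value t^{(card s - 1)} for the phase coincidence over s:
t^{(s-1)} = -Σ_{r=1}^{N+1-s} h_r T^{(s+r-1)} - c_s. -/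
noncomputable def tcrit {ι : Type*} [DecidableEq ι] (N : ℕ) (p c : ι → ℝ)
    (T : ℕ → ℝ) (s : Finset ι) : ℝ :=
  -(∑ r ∈ Finset.Icc 1 (N + 1 - s.card), hS p s r * T (s.card + r - 1)) -
    divDiff p c s

lemma hS_zero {ι : Type*} [DecidableEq ι] (p : ι → ℝ) (s : Finset ι) : hS p s 0 = 1 := by
  simp only [hS, Finset.sym_zero, Finset.sum_singleton]
  rfl

/-- Recursion: h_{m+1}(s \ {i}) = h_{m+1}(s) - p i * h_m(s). -/
lemma hS_succ_erase {ι : Type*} [DecidableEq ι] (p : ι → ℝ) (s : Finset ι) {i : ι}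
    (hi : i ∈ s) (m : ℕ) :
    hS p s (m + 1) = hS p (s.erase i) (m + 1) + p i * hS p s m := by
  classical
  unfold hS
  rw [← Finset.sum_filter_add_sum_filter_not (s.sym (m + 1)) (fun d => i ∈ d)]
  have h2 : (s.sym (m + 1)).filter (fun d => ¬ i ∈ d) = (s.erase i).sym (m + 1) := by
    ext d
    simp only [Finset.mem_filter, Finset.mem_sym_iff, Finset.mem_erase]
    constructor
    · rintro ⟨h1, h2⟩ a ha
      exact ⟨fun h => h2 (h ▸ ha), h1 a ha⟩
    · intro h
      exact ⟨fun a ha => (h a ha).2, fun hid => (h i hid).1 rfl⟩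
  have h1 : ∑ d ∈ (s.sym (m + 1)).filter (fun d => i ∈ d),
      ((d : Multiset ι).map p).prod
      = ∑ d ∈ s.sym m, p i * ((d : Multiset ι).map p).prod := by
    refine Finset.sum_bij' (fun d hd => d.erase i (Finset.mem_filter.1 hd).2)
      (fun d _ => i ::ₛ d) ?_ ?_ ?_ ?_ ?_
    · intro d hd
      rw [Finset.mem_sym_iff]
      intro a ha
      have hd' := Finset.mem_filter.1 hd
      have : a ∈ d := by
        have : (d.erase i (Finset.mem_filter.1 hd).2 : Multiset ι) = (d : Multiset ι).erase i :=
          rfl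
        have ha' : a ∈ ((d : Multiset ι).erase i) := by
          rw [← this]; exact ha
        exact Multiset.mem_of_mem_erase ha'
      exact Finset.mem_sym_iff.1 hd'.1 a this
    · intro d hd
      rw [Finset.mem_filter]
      refine ⟨Finset.mem_sym_iff.2 ?_, Sym.mem_cons_self i d⟩
      intro a ha
      rcases Sym.mem_cons.1 ha with h | h
      · exact h ▸ hi
      · exact Finset.mem_sym_iff.1 hd a h
    · intro d hd
      exact Sym.cons_erase (Finset.mem_filter.1 hd).2
    · intro d hd
      exact Sym.erase_cons_head d i
    · intro d hd
      have hmem := (Finset.mem_filter.1 hd).2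
      have hco : (d : Multiset ι) = i ::ₘ ((d.erase i hmem : Sym ι m) : Multiset ι) := by
        have := Sym.cons_erase hmem
        conv_lhs => rw [← this]
        rfl
      rw [hco, Multiset.map_cons, Multiset.prod_cons]
  rw [h1, h2, ← Finset.mul_sum]
  ring

/-- F x a := c a / ∏_{b ∈ (s.erase a).erase x} (p a - p b) equals (p a - p x) * G a. -/
lemma divDiff_term_erase {ι : Type*} [DecidableEq ι] (p c : ι → ℝ)
    (hp : Function.Injective p) (s : Finset ι) {a x : ι} (hx : x ∈ s) (hxa : x ≠ a) :
    c a / ∏ b ∈ (s.erase a).erase x, (p a - p b)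
      = (p a - p x) * (c a / ∏ b ∈ s.erase a, (p a - p b)) := by
  have hx' : x ∈ s.erase a := Finset.mem_erase.2 ⟨hxa, hx⟩
  have hne : p a - p x ≠ 0 := sub_ne_zero.2 fun h => hxa (hp h).symm
  rw [← Finset.mul_prod_erase (s.erase a) (fun b => p a - p b) hx',
    mul_comm (p a - p x) (∏ b ∈ (s.erase a).erase x, (p a - p b)), ← div_div,
    mul_comm (p a - p x) (c a / (∏ b ∈ (s.erase a).erase x, (p a - p b)) / (p a - p x)),
    div_mul_cancel₀ _ hne]

/-- Divided difference recursion. -/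
lemma divDiff_erase_sub {ι : Type*} [DecidableEq ι] (p c : ι → ℝ)
    (hp : Function.Injective p) (s : Finset ι) {i j : ι} (hi : i ∈ s) (hj : j ∈ s)
    (hij : i ≠ j) :
    divDiff p c (s.erase j) - divDiff p c (s.erase i) = (p i - p j) * divDiff p c s := by
  classical
  set F : ι → ι → ℝ := fun x a => c a / ∏ b ∈ (s.erase a).erase x, (p a - p b) with hF
  set G : ι → ℝ := fun a => c a / ∏ b ∈ s.erase a, (p a - p b) with hG
  have hFG : ∀ a ∈ s, ∀ x ∈ s, x ≠ a → F x a = (p a - p x) * G a := by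
    intro a _ x hx hxa
    exact divDiff_term_erase p c hp s hx hxa
  have hdd : ∀ x ∈ s, divDiff p c (s.erase x) = (∑ a ∈ s, F x a) - F x x := by
    intro x hx
    have : divDiff p c (s.erase x) = ∑ a ∈ s.erase x, F x a := by
      unfold divDiff
      refine Finset.sum_congr rfl fun a ha => ?_
      rw [hF]
      have hset : (s.erase x).erase a = (s.erase a).erase x := by
        ext b
        simp only [Finset.mem_erase]
        tauto
      rw [hset]
    rw [this, Finset.sum_erase_eq_sub hx]
  rw [hdd j hj, hdd i hi]
  have expand : ∀ k : ι → ℝ, ∑ a ∈ s, k a = k i + (k j + ∑ a ∈ (s.erase i).erase j, k a) := by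
    intro k
    rw [Finset.add_sum_erase _ k (Finset.mem_erase.2 ⟨hij.symm, hj⟩), Finset.add_sum_erase _ k hi]
  have hmid : ∑ a ∈ (s.erase i).erase j, (F j a - F i a)
      = ∑ a ∈ (s.erase i).erase j, (p i - p j) * G a := by
    refine Finset.sum_congr rfl fun a ha => ?_
    have ha' := Finset.mem_erase.1 ha
    have ha'' := Finset.mem_erase.1 ha'.2
    have has : a ∈ s := ha''.2
    rw [hFG a has j hj (Ne.symm ha'.1), hFG a has i hi (Ne.symm ha''.1)]
    ring
  have hsum : ∑ a ∈ s, (F j a - F i a) = (F j j - F i j) + ((F j i - F i i)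
      + ∑ a ∈ (s.erase i).erase j, (p i - p j) * G a) := by
    rw [expand (fun a => F j a - F i a), hmid]
    ring
  have hFji : F j i = (p i - p j) * G i := hFG i hi j hj hij.symm
  have hFij : F i j = (p j - p i) * G j := hFG j hj i hi hij
  have hRHS : (p i - p j) * divDiff p c s
      = (p i - p j) * G i + ((p i - p j) * G j
        + ∑ a ∈ (s.erase i).erase j, (p i - p j) * G a) := by
    unfold divDiff
    rw [← hG, Finset.mul_sum, expand (fun a => (p i - p j) * G a)]
  calc (∑ a ∈ s, F j a) - F j j - ((∑ a ∈ s, F i a) - F i i)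
      = (∑ a ∈ s, (F j a - F i a)) + (F i i - F j j) := by
        rw [Finset.sum_sub_distrib]; ring
    _ = (p i - p j) * G i + ((p i - p j) * G j
        + ∑ a ∈ (s.erase i).erase j, (p i - p j) * G a) := by
        rw [hsum, hFji, hFij]; ring
    _ = (p i - p j) * divDiff p c s := hRHS.symm

lemma sum_Icc_one_eq_sum_range (k : ℕ) (f : ℕ → ℝ) :
    ∑ r ∈ Finset.Icc 1 k, f r = ∑ i ∈ Finset.range k, f (1 + i) := by
  rw [← Finset.Ico_add_one_right_eq_Icc, Finset.sum_Ico_eq_sum_range]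
  simp

/-- t^{(n-1)}_{k_1…k̂_i…k_{n+1}} - t^{(n-1)}_{k_1…k̂_j…k_{n+1}}
  = (p_{k_i} - p_{k_j})(t^{(n)} - t^{(n)}_{k_1…k_{n+1}}). -/
theorem tcrit_difference (N n : ℕ) (hn : 1 ≤ n) (hN : n ≤ N)
    (p c : Fin (n + 1) → ℝ) (hp : Function.Injective p) (T : ℕ → ℝ)
    (i j : Fin (n + 1)) :
    tcrit N p c T (Finset.univ.erase i) - tcrit N p c T (Finset.univ.erase j)
      = (p i - p j) * (T n - tcrit N p c T Finset.univ) := by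
  classical
  rcases eq_or_ne i j with rfl | hij
  · simp
  have hcardU : (Finset.univ : Finset (Fin (n + 1))).card = n + 1 := by simp
  have hcard : ∀ x : Fin (n + 1), (Finset.univ.erase x).card = n := by
    intro x
    rw [Finset.card_erase_of_mem (Finset.mem_univ x), hcardU]
    omega
  -- hS on erased sets
  have hSe : ∀ (x : Fin (n + 1)) (r : ℕ),
      hS p (Finset.univ.erase x) (r + 1) = hS p Finset.univ (r + 1) - p x * hS p Finset.univ r := by
    intro x r
    have := hS_succ_erase p Finset.univ (Finset.mem_univ x) r
    linarith
  -- expand tcrit on erased sets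
  have htc : ∀ x : Fin (n + 1), tcrit N p c T (Finset.univ.erase x)
      = -(∑ r ∈ Finset.Icc 1 (N + 1 - n),
            (hS p Finset.univ r - p x * hS p Finset.univ (r - 1)) * T (n + r - 1))
        - divDiff p c (Finset.univ.erase x) := by
    intro x
    unfold tcrit
    rw [hcard x]
    congr 1
    congr 1
    refine Finset.sum_congr rfl fun r hr => ?_
    have hr1 : 1 ≤ r := (Finset.mem_Icc.1 hr).1
    obtain ⟨r', rfl⟩ : ∃ r', r = r' + 1 := ⟨r - 1, by omega⟩
    rw [hSe x r']
    simp
  rw [htc i, htc j]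
  -- divided difference part
  have hdd : divDiff p c (Finset.univ.erase i) - divDiff p c (Finset.univ.erase j)
      = (p j - p i) * divDiff p c Finset.univ :=
    divDiff_erase_sub p c hp Finset.univ (Finset.mem_univ j) (Finset.mem_univ i) hij.symm
  -- expand tcrit on univ
  have htcU : tcrit N p c T Finset.univ
      = -(∑ r ∈ Finset.Icc 1 (N - n), hS p Finset.univ r * T (n + r))
        - divDiff p c Finset.univ := by
    unfold tcrit
    rw [hcardU]
    have : N + 1 - (n + 1) = N - n := by omega
    rw [this]
    congr 1
    congr 1
    refine Finset.sum_congr rfl fun r hr => ?_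
    have : n + 1 + r - 1 = n + r := by omega
    rw [this]
  rw [htcU]
  -- key sum identity
  have hkey : ∑ r ∈ Finset.Icc 1 (N + 1 - n), hS p Finset.univ (r - 1) * T (n + r - 1)
      = T n + ∑ r ∈ Finset.Icc 1 (N - n), hS p Finset.univ r * T (n + r) := by
    rw [sum_Icc_one_eq_sum_range, sum_Icc_one_eq_sum_range]
    have h1 : N + 1 - n = (N - n) + 1 := by omega
    rw [h1, Finset.sum_range_succ']
    have h2 : ∀ k : ℕ, 1 + k - 1 = k := fun k => by omega
    have h3 : ∀ k : ℕ, n + (1 + k) - 1 = n + k := fun k => by omega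
    simp only [h2, h3]
    rw [hS_zero]
    have h6 : ∀ k : ℕ, hS p Finset.univ (k + 1) * T (n + (k + 1))
        = hS p Finset.univ (1 + k) * T (n + (1 + k)) := by
      intro k
      rw [Nat.add_comm k 1]
    simp only [Nat.add_zero, one_mul, h6]
    ring
  have hsplit : ∑ r ∈ Finset.Icc 1 (N + 1 - n),
        (hS p Finset.univ r - p i * hS p Finset.univ (r - 1)) * T (n + r - 1)
      - ∑ r ∈ Finset.Icc 1 (N + 1 - n),
        (hS p Finset.univ r - p j * hS p Finset.univ (r - 1)) * T (n + r - 1)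
      = (p j - p i) * ∑ r ∈ Finset.Icc 1 (N + 1 - n),
          hS p Finset.univ (r - 1) * T (n + r - 1) := by
    rw [← Finset.sum_sub_distrib, Finset.mul_sum]
    refine Finset.sum_congr rfl fun r _ => ?_
    ring
  have heq : -(∑ r ∈ Finset.Icc 1 (N + 1 - n),
        (hS p Finset.univ r - p i * hS p Finset.univ (r - 1)) * T (n + r - 1))
      - divDiff p c (Finset.univ.erase i)
      - (-(∑ r ∈ Finset.Icc 1 (N + 1 - n),
          (hS p Finset.univ r - p j * hS p Finset.univ (r - 1)) * T (n + r - 1))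
        - divDiff p c (Finset.univ.erase j))
      = -(∑ r ∈ Finset.Icc 1 (N + 1 - n),
          (hS p Finset.univ r - p i * hS p Finset.univ (r - 1)) * T (n + r - 1)
        - ∑ r ∈ Finset.Icc 1 (N + 1 - n),
          (hS p Finset.univ r - p j * hS p Finset.univ (r - 1)) * T (n + r - 1))
        - (divDiff p c (Finset.univ.erase i) - divDiff p c (Finset.univ.erase j)) := by
    ring
  rw [heq, hsplit, hdd, hkey]
  ring
end

section
/- For {k_1,…,k_{n+1}} with pairwise distinct p's, the phase difference satisfies θ_{k_1} - θ_{k_{n+1}} = -Σ_{r=1}^n (∏_{j=1}^r (p_{k_{n+1}} - p_{k_j})) (t^{(r)} - t^{(r)}_{k_1…k_{r+1}}), where θ_k = Σ_{r=1}^N p_k^r t^{(r)} + c_k and t^{(r)}_{k_1…k_{r+1}} are the critical values determined by the coincidence θ_{k_1} = … = θ_{k_{r+1}} (solved for t^{(1)},…,t^{(r)} in terms of t^{(r+1)},…,t^{(N)}). -/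
open Polynomial Finset in
lemma interp_key (r : ℕ) (hr : 1 ≤ r) (q : Polynomial ℝ) (v : ℕ → ℝ)
    (hv : Set.InjOn v (Finset.range r))
    (hdeg : ∀ m : ℕ, r < m → q.coeff m = 0)
    (hval : ∀ j, j < r → q.eval (v j) = q.eval (v 0)) (x : ℝ) :
    q.eval x = q.eval (v 0) + q.coeff r * ∏ j ∈ Finset.range r, (x - v j) := by
  have hm : (∏ j ∈ Finset.range r, (X - C (v j))).Monic :=
    monic_prod_of_monic _ _ fun j _ => monic_X_sub_C _
  have hnd : (∏ j ∈ Finset.range r, (X - C (v j))).natDegree = r := by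
    rw [natDegree_prod_of_monic _ _ fun j _ => monic_X_sub_C _]
    simp
  have hP : q - C (q.eval (v 0)) - C (q.coeff r) * ∏ j ∈ Finset.range r, (X - C (v j)) = 0 := by
    apply Polynomial.eq_zero_of_degree_lt_of_eval_index_eq_zero (Finset.range r) hv
    · rw [Finset.card_range]
      rw [Polynomial.degree_lt_iff_coeff_zero]
      intro m hm'
      rcases eq_or_lt_of_le (Nat.cast_le.mp hm') with h | h
      · subst h
        have h1 : (∏ j ∈ Finset.range r, (X - C (v j))).coeff r = 1 := by
          have h2 := hm.coeff_natDegree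
          rwa [hnd] at h2
        have : ¬ (r = 0) := by omega
        simp [coeff_C, this, h1]
      · have h1 : (∏ j ∈ Finset.range r, (X - C (v j))).coeff m = 0 :=
          coeff_eq_zero_of_natDegree_lt (by omega)
        have : ¬ (m = 0) := by omega
        simp [coeff_C, this, h1, hdeg m h]
    · intro i hi
      rw [Finset.mem_range] at hi
      have h0 : (∏ j ∈ Finset.range r, (X - C (v j))).eval (v i) = 0 := by
        rw [eval_prod]
        exact Finset.prod_eq_zero (Finset.mem_range.mpr hi) (by simp)
      simp [h0, hval i hi]
  have := congrArg (Polynomial.eval x) hP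
  simp only [eval_sub, eval_mul, eval_C, eval_prod, eval_X, eval_zero] at this
  linarith [this]

/-- θ_{k_1} - θ_{k_{n+1}} = -Σ_{r=1}^n (∏_{j=1}^r (p_{k_{n+1}} - p_{k_j}))
(t^{(r)} - t^{(r)}_{k_1…k_{r+1}}), where the critical values t^{(r)}_{k_1…k_{r+1}}
are characterized as those time values (agreeing with the actual times above level r)
at which the phases θ_{k_1},…,θ_{k_{r+1}} all coincide. -/
theorem phase_difference_telescoping (N n : ℕ) (hn : 1 ≤ n) (hN : n ≤ N)
    (p c : Fin (n + 1) → ℝ) (hp : Function.Injective p)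
    (T : ℕ → ℝ) (T' : ℕ → ℕ → ℝ)
    (hagree : ∀ r s : ℕ, r < s → T' r s = T s)
    (hcoin : ∀ r : ℕ, 1 ≤ r → r ≤ n → ∀ a b : Fin (n + 1), (a : ℕ) ≤ r → (b : ℕ) ≤ r →
      (∑ s ∈ Finset.Icc 1 N, p a ^ s * T' r s) + c a
        = (∑ s ∈ Finset.Icc 1 N, p b ^ s * T' r s) + c b) :
    ((∑ s ∈ Finset.Icc 1 N, p 0 ^ s * T s) + c 0) -
        ((∑ s ∈ Finset.Icc 1 N, p (Fin.last n) ^ s * T s) + c (Fin.last n))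
      = -∑ r ∈ Finset.Icc 1 n,
          (∏ j ∈ Finset.range r, (p (Fin.last n) - p (Fin.ofNat (n + 1) j))) *
            (T r - T' r r) := by
  set L : Fin (n + 1) := Fin.last n with hLdef
  have hLval : (L : ℕ) = n := Fin.val_last n
  set D : ℕ → ℝ := fun r => (∑ s ∈ Finset.Icc 1 N, p L ^ s * T' r s)
      - ∑ s ∈ Finset.Icc 1 N, p 0 ^ s * T' r s with hDdef
  -- D 0 uses the actual times
  have hD0 : D 0 = (∑ s ∈ Finset.Icc 1 N, p L ^ s * T s)
      - ∑ s ∈ Finset.Icc 1 N, p 0 ^ s * T s := by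
    have h1 : ∀ a : Fin (n+1), ∑ s ∈ Finset.Icc 1 N, p a ^ s * T' 0 s
        = ∑ s ∈ Finset.Icc 1 N, p a ^ s * T s := by
      intro a
      refine Finset.sum_congr rfl fun s hs => ?_
      rw [Finset.mem_Icc] at hs
      rw [hagree 0 s (by omega)]
    simp only [hDdef, h1]
  -- D n equals c 0 - c L via the coincidence at level n
  have hDn : D n = c 0 - c L := by
    have := hcoin n hn le_rfl 0 L (by simp) (by rw [hLval])
    simp only [hDdef]
    linarith
  -- per-term identity
  have key : ∀ r : ℕ, 1 ≤ r → r ≤ n → D r - D (r - 1)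
      = -((∏ j ∈ Finset.range r, (p L - p (Fin.ofNat (n + 1) j))) * (T r - T' r r)) := by
    intro r hr1 hrn
    set q : Polynomial ℝ := ∑ s ∈ Finset.Icc 1 N,
      Polynomial.C (T' r s - T' (r - 1) s) * Polynomial.X ^ s with hqdef
    have hcoeff : ∀ m : ℕ, q.coeff m
        = if m ∈ Finset.Icc 1 N then T' r m - T' (r - 1) m else 0 := by
      intro m
      simp only [hqdef, Polynomial.finset_sum_coeff, Polynomial.coeff_C_mul,
        Polynomial.coeff_X_pow, mul_ite, mul_one, mul_zero, Finset.sum_ite_eq,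
        Finset.mem_Icc]
    have heval : ∀ a : Fin (n + 1), q.eval (p a)
        = (∑ s ∈ Finset.Icc 1 N, p a ^ s * T' r s)
          - ∑ s ∈ Finset.Icc 1 N, p a ^ s * T' (r - 1) s := by
      intro a
      rw [← Finset.sum_sub_distrib]
      simp only [hqdef, Polynomial.eval_finset_sum, Polynomial.eval_mul,
        Polynomial.eval_C, Polynomial.eval_pow, Polynomial.eval_X]
      refine Finset.sum_congr rfl fun s _ => by ring
    set v : ℕ → ℝ := fun j => p (Fin.ofNat (n + 1) j) with hvdef
    have hvcast : ∀ j : ℕ, j ≤ n → ((Fin.ofNat (n + 1) j) : ℕ) = j := by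
      intro j hj
      rw [Fin.val_ofNat]; exact Nat.mod_eq_of_lt (by omega)
    have hv : Set.InjOn v (Finset.range r) := by
      intro i hi j hj h
      simp only [Finset.coe_range, Set.mem_Iio] at hi hj
      have := hp h
      have hi' := hvcast i (by omega)
      have hj' := hvcast j (by omega)
      have := congrArg Fin.val this
      omega
    have hdeg : ∀ m : ℕ, r < m → q.coeff m = 0 := by
      intro m hm
      rw [hcoeff]
      split
      · rw [hagree r m hm, hagree (r - 1) m (by omega)]; ring
      · rfl
    have hcoeffr : q.coeff r = T' r r - T r := by
      rw [hcoeff, if_pos (Finset.mem_Icc.mpr ⟨hr1, by omega⟩), hagree (r - 1) r (by omega)]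
    have hv0 : v 0 = p 0 := by simp [hvdef]
    have hval : ∀ j, j < r → q.eval (v j) = q.eval (v 0) := by
      intro j hj
      rw [hv0]
      simp only [hvdef]
      have hjle : ((Fin.ofNat (n + 1) j) : ℕ) ≤ r := by rw [hvcast j (by omega)]; omega
      have e1 := hcoin r hr1 hrn (Fin.ofNat (n + 1) j) 0 hjle (by simp)
      rcases Nat.lt_or_ge j 1 with hj1 | hj1
      · interval_cases j
        simp
      · have hr2 : 1 ≤ r - 1 := by omega
        have hjle' : ((Fin.ofNat (n + 1) j) : ℕ) ≤ r - 1 := by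
          rw [hvcast j (by omega)]; omega
        have e2 := hcoin (r - 1) hr2 (by omega) (Fin.ofNat (n + 1) j) 0 hjle' (by simp)
        rw [heval, heval]
        linarith
    have hkey := interp_key r hr1 q v hv hdeg hval (p L)
    rw [hv0, hcoeffr] at hkey
    have hDr : D r - D (r - 1) = q.eval (p L) - q.eval (p 0) := by
      rw [heval, heval]
      simp only [hDdef]
      ring
    rw [hDr, hkey]
    have hprod : ∏ j ∈ Finset.range r, (p L - v j)
        = ∏ j ∈ Finset.range r, (p L - p (Fin.ofNat (n + 1) j)) := rfl
    rw [hprod]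
    ring
  -- telescoping
  have tel : ∀ m : ℕ, ∑ r ∈ Finset.Icc 1 m, (D r - D (r - 1)) = D m - D 0 := by
    intro m
    induction m with
    | zero => simp
    | succ k ih =>
      rw [Finset.sum_Icc_succ_top (by omega), ih]
      simp only [Nat.add_sub_cancel]
      ring
  have hsum : ∑ r ∈ Finset.Icc 1 n, (D r - D (r - 1))
      = -∑ r ∈ Finset.Icc 1 n,
          (∏ j ∈ Finset.range r, (p L - p (Fin.ofNat (n + 1) j))) * (T r - T' r r) := by
    rw [← Finset.sum_neg_distrib]
    refine Finset.sum_congr rfl fun r hr => ?_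
    rw [Finset.mem_Icc] at hr
    rw [key r hr.1 hr.2]
  rw [← hsum, tel n, hDn, hD0]
  ring
end
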